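/- Let B ∈ ℤ^{n×n}, n ≥ 2, with det B > 0 and each row of B having gcd 1. Let A = adj B and Γ = {exp(2πi A⁻¹ν) : ν ∈ ℤ^{n×1}} ⊂ 𝕋ⁿ. Then for each 1 ≤ j ≤ n, the projection Γ_j = {γ_j : (γ₁,...,γ_n)ᵀ ∈ Γ} of Γ onto the j-th coordinate is a cyclic group of order det B. -/

import Mathlib

lemma bezout_finset {ι : Type*} [DecidableEq ι] (s : Finset ι) (f : ι → ℤ) :
    ∃ c : ι → ℤ, ∑ i ∈ s, c i * f i = s.gcd f := by
  induction s using Finset.cons_induction with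
  | empty => exact ⟨0, by simp⟩
  | cons a s ha ih =>
    obtain ⟨c, hc⟩ := ih
    refine ⟨fun i => if i = a then (f a).gcdA (s.gcd f) else (f a).gcdB (s.gcd f) * c i, ?_⟩
    rw [Finset.sum_cons, Finset.cons_eq_insert, Finset.gcd_insert]
    simp only [if_pos rfl]
    have h2 : ∑ i ∈ s, (if i = a then (f a).gcdA (s.gcd f) else (f a).gcdB (s.gcd f) * c i) * f i
        = (f a).gcdB (s.gcd f) * ∑ i ∈ s, c i * f i := by
      rw [Finset.mul_sum]
      refine Finset.sum_congr rfl fun i hi => ?_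
      rw [if_neg (by rintro rfl; exact ha hi), mul_assoc]
    rw [h2, hc, ← Int.coe_gcd, Int.gcd_eq_gcd_ab]
    simp only [if_true]
    ring

theorem stmt12 (n : ℕ) (hn : 2 ≤ n) (B : Matrix (Fin n) (Fin n) ℤ) (hB : 0 < B.det)
    (hgcd : ∀ j, Finset.univ.gcd (fun k => B j k) = 1) (j : Fin n) :
    ∃ ζ : ℂ,
      {z : ℂ | ∃ γ ∈ {γ : Fin n → ℂ | ∃ ν : Fin n → ℤ, ∀ i,
          γ i = Complex.exp (2 * Real.pi * Complex.I *
            ((∑ k, ((B.adjugate).map (fun a => (a : ℚ)))⁻¹ i k * (ν k : ℚ) : ℚ) : ℂ))},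
        γ j = z} = {z : ℂ | ∃ m : ℤ, z = ζ ^ m} ∧
      Set.ncard {z : ℂ | ∃ m : ℤ, z = ζ ^ m} = B.det.toNat := by
  set d : ℕ := B.det.toNat with hd
  have hdpos : 0 < d := by omega
  have hdZ : (d : ℤ) = B.det := Int.toNat_of_nonneg hB.le
  set ζ : ℂ := Complex.exp (2 * Real.pi * Complex.I / d) with hζ
  have hprim : IsPrimitiveRoot ζ d := Complex.isPrimitiveRoot_exp d hdpos.ne'
  -- entry formula for the inverse of the adjugate
  have hdetQ : ((B.map (fun a => (a : ℚ))).det) = (B.det : ℚ) := by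
    have := (Int.castRingHom ℚ).map_det B
    simpa [RingHom.mapMatrix_apply, Int.coe_castRingHom] using this.symm
  have hdetQ0 : (B.det : ℚ) ≠ 0 := Int.cast_ne_zero.mpr hB.ne'
  have hu : IsUnit ((B.map (fun a => (a : ℚ))).det) := by
    rw [hdetQ]; exact (isUnit_iff_ne_zero).mpr hdetQ0
  have hentry : ∀ i k, ((B.adjugate).map (fun a => (a : ℚ)))⁻¹ i k
      = (B i k : ℚ) / (B.det : ℚ) := by
    have hadj : (B.adjugate).map (fun a => (a : ℚ))
        = ((B.map (fun a => (a : ℚ)))).adjugate := by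
      have := RingHom.map_adjugate (Int.castRingHom ℚ) B
      simpa [RingHom.mapMatrix_apply] using this
    intro i k
    rw [hadj, Matrix.inv_adjugate _ hu]
    have hval : ((hu.unit⁻¹ : ℚˣ) : ℚ) = (B.det : ℚ)⁻¹ := by
      rw [← hdetQ]
      rw [Units.val_inv_eq_inv_val, hu.unit_spec]
    simp [Matrix.smul_apply, Units.smul_def, hval, Matrix.map_apply, div_eq_inv_mul]
  -- exponent simplification
  have hexp : ∀ (i : Fin n) (ν : Fin n → ℤ),
      (∑ k, ((B.adjugate).map (fun a => (a : ℚ)))⁻¹ i k * (ν k : ℚ) : ℚ)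
      = ((∑ k, B i k * ν k : ℤ) : ℚ) / (B.det : ℚ) := by
    intro i ν
    push_cast
    rw [Finset.sum_div]
    refine Finset.sum_congr rfl fun k _ => ?_
    rw [hentry]
    rw [hdetQ]; ring
  -- zpow formula
  have hzpow : ∀ m : ℤ, ζ ^ m = Complex.exp (2 * Real.pi * Complex.I * (m / d)) := by
    intro m
    rw [hζ, ← Complex.exp_int_mul]
    ring_nf
  refine ⟨ζ, ?_, ?_⟩
  · ext z
    simp only [Set.mem_setOf_eq]
    constructor
    · rintro ⟨γ, ⟨ν, hγ⟩, rfl⟩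
      refine ⟨∑ k, B j k * ν k, ?_⟩
      rw [hγ j, hexp, hzpow]
      congr 1
      push_cast [← hdZ]
      ring
    · rintro ⟨m, rfl⟩
      obtain ⟨c, hc⟩ := bezout_finset Finset.univ (fun k => B j k)
      rw [hgcd j] at hc
      set ν : Fin n → ℤ := fun k => m * c k with hν
      have hsum : ∑ k, B j k * ν k = m := by
        simp only [hν]
        calc ∑ k, B j k * (m * c k) = m * ∑ k, c k * B j k := by
              rw [Finset.mul_sum]; exact Finset.sum_congr rfl fun k _ => by ring
          _ = m := by rw [hc, mul_one]
      refine ⟨fun i => Complex.exp (2 * Real.pi * Complex.I *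
          ((∑ k, ((B.adjugate).map (fun a => (a : ℚ)))⁻¹ i k * (ν k : ℚ) : ℚ) : ℂ)),
        ⟨ν, fun i => rfl⟩, ?_⟩
      show Complex.exp (2 * Real.pi * Complex.I *
          ((∑ k, ((B.adjugate).map (fun a => (a : ℚ)))⁻¹ j k * (ν k : ℚ) : ℚ) : ℂ)) = ζ ^ m
      rw [hexp, hsum, hzpow]
      congr 1
      push_cast [← hdZ]
      ring
  · have hset : {z : ℂ | ∃ m : ℤ, z = ζ ^ m}
        = ↑((Finset.range d).image fun m : ℕ => ζ ^ m) := by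
      ext z
      simp only [Set.mem_setOf_eq, Finset.coe_image, Set.mem_image, Finset.mem_coe,
        Finset.mem_range]
      constructor
      · rintro ⟨m, rfl⟩
        refine ⟨(m % d).toNat, ?_, ?_⟩
        · have h1 : m % d < d := Int.emod_lt_of_pos m (by exact_mod_cast hdpos)
          omega
        · have h0 : 0 ≤ m % (d : ℤ) := Int.emod_nonneg m (by exact_mod_cast hdpos.ne')
          have : ζ ^ ((m % d).toNat : ℤ) = ζ ^ m := by
            rw [Int.toNat_of_nonneg h0]
            conv_rhs => rw [← Int.emod_add_mul_ediv m d]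
            rw [zpow_add₀ (hprim.ne_zero hdpos.ne'), zpow_mul]
            norm_cast
            rw [hprim.pow_eq_one]
            simp
          rw [← this, zpow_natCast]
      · rintro ⟨m, _, rfl⟩
        exact ⟨m, by rw [zpow_natCast]⟩
    rw [hset, Set.ncard_coe_finset, Finset.card_image_of_injOn, Finset.card_range]
    intro a ha b hb hab
    exact hprim.pow_inj (Finset.mem_range.mp (Finset.mem_coe.mp ha))
      (Finset.mem_range.mp (Finset.mem_coe.mp hb)) hab
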